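/- Let μ and λ be nonincreasing K-tuples of nonnegative real numbers. If Σᵢ μᵢ^α = Σᵢ λᵢ^α for all α in a subset A ⊂ [1,∞) possessing a limit point, then μ = λ. -/

import Mathlib

open Finset Real

/-- The exponential character `α ↦ exp (t * α)` as a monoid hom on `Multiplicative ℝ`. -/
noncomputable def expChar (t : ℝ) : Multiplicative ℝ →* ℝ where
  toFun α := Real.exp (t * Multiplicative.toAdd α)
  map_one' := by simp
  map_mul' a b := by
    simp [mul_add, Real.exp_add]

lemma expChar_injective : Function.Injective expChar := by
  intro s t h
  have := congrArg (fun f => (f : Multiplicative ℝ →* ℝ) (Multiplicative.ofAdd 1)) h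
  simpa [expChar, Real.exp_eq_exp] using this

lemma expChar_linearIndependent :
    LinearIndependent ℝ (fun t : ℝ => (expChar t : Multiplicative ℝ → ℝ)) :=
  (linearIndependent_monoidHom (Multiplicative ℝ) ℝ).comp expChar expChar_injective

/-- If μ and λ are nonincreasing K-tuples of nonnegative reals with
Σ μᵢ^α = Σ λᵢ^α for all α in a subset A of [1,∞) possessing a limit point, then μ = λ. -/
theorem eq_of_phi_alpha_eq (K : ℕ) (μ lam : Fin K → ℝ)
    (hμa : Antitone μ) (hlama : Antitone lam)
    (hμ0 : ∀ i, 0 ≤ μ i) (hlam0 : ∀ i, 0 ≤ lam i)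
    (A : Set ℝ) (hA : A ⊆ Set.Ici 1)
    (hacc : ∃ x : ℝ, AccPt x (Filter.principal A))
    (heq : ∀ α ∈ A, ∑ i, μ i ^ α = ∑ i, lam i ^ α) :
    μ = lam := by
  classical
  obtain ⟨x₀, hx₀⟩ := hacc
  -- positive index sets
  set Pμ : Finset (Fin K) := univ.filter (fun i => 0 < μ i) with hPμ
  set Pl : Finset (Fin K) := univ.filter (fun i => 0 < lam i) with hPl
  -- the analytic function
  set f : ℝ → ℝ := fun α =>
    (∑ i ∈ Pμ, Real.exp (Real.log (μ i) * α)) - ∑ i ∈ Pl, Real.exp (Real.log (lam i) * α)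
    with hf
  have hanalytic : AnalyticOnNhd ℝ f Set.univ := by
    have h1 : ∀ (s : Finset (Fin K)) (c : Fin K → ℝ),
        AnalyticOnNhd ℝ (fun α : ℝ => ∑ i ∈ s, Real.exp (c i * α)) Set.univ := by
      intro s c
      apply Finset.analyticOnNhd_fun_sum
      intro i _
      exact AnalyticOnNhd.rexp (analyticOnNhd_const.mul analyticOnNhd_id)
    exact (h1 Pμ fun i => Real.log (μ i)).sub (h1 Pl fun i => Real.log (lam i))
  -- f vanishes on A
  have hfA : ∀ α ∈ A, f α = 0 := by
    intro α hα
    have hα1 : (1:ℝ) ≤ α := hA hα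
    have hsum : ∀ (g : Fin K → ℝ) (hg : ∀ i, 0 ≤ g i),
        ∑ i, g i ^ α = ∑ i ∈ univ.filter (fun i => 0 < g i), Real.exp (Real.log (g i) * α) := by
      intro g hg
      rw [← Finset.sum_filter_add_sum_filter_not univ (fun i => 0 < g i) (fun i => g i ^ α)]
      have h2 : ∑ i ∈ univ.filter (fun i => ¬ 0 < g i), g i ^ α = 0 := by
        apply Finset.sum_eq_zero
        intro i hi
        simp only [Finset.mem_filter] at hi
        have : g i = 0 := le_antisymm (not_lt.1 hi.2) (hg i)
        rw [this]
        exact Real.zero_rpow (by linarith)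
      rw [h2, add_zero]
      apply Finset.sum_congr rfl
      intro i hi
      simp only [Finset.mem_filter] at hi
      exact Real.rpow_def_of_pos hi.2 α
    have := heq α hα
    rw [hsum μ hμ0, hsum lam hlam0] at this
    simp only [hf, hPμ, hPl]
    rw [this]; ring
  -- identity theorem: f ≡ 0
  have hfreq : ∃ᶠ z in nhdsWithin x₀ {x₀}ᶜ, f z = 0 := by
    rw [accPt_iff_frequently] at hx₀
    rw [frequently_nhdsWithin_iff]
    exact hx₀.mono (fun y hy => ⟨hfA y hy.2, hy.1⟩)
  have hfzero : ∀ α : ℝ, f α = 0 := by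
    intro α
    exact hanalytic.eqOn_zero_of_preconnected_of_frequently_eq_zero isPreconnected_univ
      (Set.mem_univ x₀) hfreq (Set.mem_univ α)
  -- the set of exponents
  set T : Finset ℝ := Pμ.image (fun i => Real.log (μ i)) ∪ Pl.image (fun i => Real.log (lam i))
    with hT
  set cμ : ℝ → ℕ := fun t => (Pμ.filter (fun i => Real.log (μ i) = t)).card with hcμ
  set cl : ℝ → ℕ := fun t => (Pl.filter (fun i => Real.log (lam i) = t)).card with hcl
  have hmapμ : ∀ i ∈ Pμ, Real.log (μ i) ∈ T := by
    intro i hi; exact Finset.mem_union_left _ (Finset.mem_image_of_mem _ hi)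
  have hmapl : ∀ i ∈ Pl, Real.log (lam i) ∈ T := by
    intro i hi; exact Finset.mem_union_right _ (Finset.mem_image_of_mem _ hi)
  -- grouped sum equality
  have hgroup : ∀ α : ℝ, ∑ t ∈ T, ((cμ t : ℝ) - (cl t : ℝ)) * Real.exp (t * α) = 0 := by
    intro α
    have hμg : ∑ i ∈ Pμ, Real.exp (Real.log (μ i) * α)
        = ∑ t ∈ T, (cμ t : ℝ) * Real.exp (t * α) := by
      rw [← Finset.sum_fiberwise_of_maps_to hmapμ (fun i => Real.exp (Real.log (μ i) * α))]
      apply Finset.sum_congr rfl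
      intro t _
      trans ∑ _i ∈ Pμ.filter (fun i => Real.log (μ i) = t), Real.exp (t * α)
      · apply Finset.sum_congr rfl
        intro i hi
        simp only [Finset.mem_filter] at hi
        rw [hi.2]
      · rw [Finset.sum_const, nsmul_eq_mul]
    have hlg : ∑ i ∈ Pl, Real.exp (Real.log (lam i) * α)
        = ∑ t ∈ T, (cl t : ℝ) * Real.exp (t * α) := by
      rw [← Finset.sum_fiberwise_of_maps_to hmapl (fun i => Real.exp (Real.log (lam i) * α))]
      apply Finset.sum_congr rfl
      intro t _
      trans ∑ _i ∈ Pl.filter (fun i => Real.log (lam i) = t), Real.exp (t * α)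
      · apply Finset.sum_congr rfl
        intro i hi
        simp only [Finset.mem_filter] at hi
        rw [hi.2]
      · rw [Finset.sum_const, nsmul_eq_mul]
    have := hfzero α
    simp only [hf] at this
    rw [hμg, hlg] at this
    simp only [sub_mul, Finset.sum_sub_distrib]
    linarith
  -- linear independence gives cμ = cl on T
  have hcoeff : ∀ t ∈ T, (cμ t : ℝ) - (cl t : ℝ) = 0 := by
    have hLI := expChar_linearIndependent
    rw [linearIndependent_iff'] at hLI
    apply hLI T (fun t => (cμ t : ℝ) - (cl t : ℝ))
    funext α
    have := hgroup (Multiplicative.toAdd α)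
    simpa [expChar, Finset.sum_apply, smul_eq_mul] using this
  have hcount : ∀ t, cμ t = cl t := by
    intro t
    by_cases ht : t ∈ T
    · exact_mod_cast sub_eq_zero.1 (hcoeff t ht)
    · have h1 : cμ t = 0 := by
        rw [hcμ, Finset.card_eq_zero, Finset.filter_eq_empty_iff]
        intro i hi hit
        exact ht (hit ▸ hmapμ i hi)
      have h2 : cl t = 0 := by
        rw [hcl, Finset.card_eq_zero, Finset.filter_eq_empty_iff]
        intro i hi hit
        exact ht (hit ▸ hmapl i hi)
      rw [h1, h2]
  -- counts of each value agree
  have hval : ∀ x : ℝ, (univ.filter (fun i => μ i = x)).card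
      = (univ.filter (fun i => lam i = x)).card := by
    intro x
    rcases lt_trichotomy x 0 with hx | hx | hx
    · have e1 : univ.filter (fun i => μ i = x) = ∅ := by
        rw [Finset.filter_eq_empty_iff]; intro i _ h; linarith [hμ0 i]
      have e2 : univ.filter (fun i => lam i = x) = ∅ := by
        rw [Finset.filter_eq_empty_iff]; intro i _ h; linarith [hlam0 i]
      rw [e1, e2]
    · -- x = 0 : counts of zero = K - card positives; card positives equal via fibers
      subst hx
      have cards : Pμ.card = Pl.card := by
        rw [Finset.card_eq_sum_card_fiberwise hmapμ, Finset.card_eq_sum_card_fiberwise hmapl]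
        exact Finset.sum_congr rfl (fun t _ => hcount t)
      have e1 : univ.filter (fun i => μ i = 0) = univ \ Pμ := by
        ext i
        simp only [Finset.mem_filter, Finset.mem_sdiff, Finset.mem_univ, true_and, hPμ,
          Finset.mem_filter, not_and, not_lt]
        constructor
        · intro h; exact h.le
        · intro h; exact le_antisymm h (hμ0 i)
      have e2 : univ.filter (fun i => lam i = 0) = univ \ Pl := by
        ext i
        simp only [Finset.mem_filter, Finset.mem_sdiff, Finset.mem_univ, true_and, hPl,
          Finset.mem_filter, not_and, not_lt]
        constructor
        · intro h; exact h.le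
        · intro h; exact le_antisymm h (hlam0 i)
      rw [e1, e2, Finset.card_sdiff_of_subset (Finset.subset_univ _),
        Finset.card_sdiff_of_subset (Finset.subset_univ _), cards]
    · -- x > 0 : count = fiber count at log x
      have e1 : univ.filter (fun i => μ i = x) = Pμ.filter (fun i => Real.log (μ i) = Real.log x) := by
        ext i
        simp only [Finset.mem_filter, Finset.mem_univ, true_and, hPμ]
        constructor
        · intro h; exact ⟨h ▸ hx, by rw [h]⟩
        · rintro ⟨hpos, hlog⟩
          exact Real.log_injOn_pos (Set.mem_Ioi.2 hpos) (Set.mem_Ioi.2 hx) hlog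
      have e2 : univ.filter (fun i => lam i = x) = Pl.filter (fun i => Real.log (lam i) = Real.log x) := by
        ext i
        simp only [Finset.mem_filter, Finset.mem_univ, true_and, hPl]
        constructor
        · intro h; exact ⟨h ▸ hx, by rw [h]⟩
        · rintro ⟨hpos, hlog⟩
          exact Real.log_injOn_pos (Set.mem_Ioi.2 hpos) (Set.mem_Ioi.2 hx) hlog
      rw [e1, e2]
      exact hcount (Real.log x)
  -- conclude via sorted lists
  have hperm : (List.ofFn μ).Perm (List.ofFn lam) := by
    rw [List.perm_iff_count]
    intro a
    have h1 : (List.ofFn μ).count a = (univ.filter (fun i => μ i = a)).card := by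
      rw [← Multiset.coe_count, ← Fin.univ_val_map, Multiset.count_map]
      simp [Finset.card, Finset.filter_val, eq_comm]
    have h2 : (List.ofFn lam).count a = (univ.filter (fun i => lam i = a)).card := by
      rw [← Multiset.coe_count, ← Fin.univ_val_map, Multiset.count_map]
      simp [Finset.card, Finset.filter_val, eq_comm]
    rw [h1, h2, hval a]
  have hs1 : List.Pairwise (· ≥ ·) (List.ofFn μ) := by
    rw [List.pairwise_ofFn]
    intro i j hij
    exact hμa hij.le
  have hs2 : List.Pairwise (· ≥ ·) (List.ofFn lam) := by
    rw [List.pairwise_ofFn]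
    intro i j hij
    exact hlama hij.le
  exact List.ofFn_injective (List.Perm.eq_of_pairwise' hs1 hs2 hperm)
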